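/- Assume Assumption A holds, that μ(ω) > 0 for every ω ∈ Ω (write μ_min = min_ω μ(ω)), and that 0 ≤ γ with γ/(μ_min·Δ) < 1. Then for every ε > 0 there exists a direct-revelation signaling scheme π (with signal set S = A) such that U_μ(π,ρ) ≥ OPT^BP(μ) − γ/(μ_min·Δ) − ε for every γ-best-responding receiver strategy ρ. -/

import Mathlib

open Finset
open scoped BigOperators Classical

noncomputable section

/-- `p` is a family of probability distributions on the finite set `β`, indexed by `α`. -/
def IsDist {α β : Type*} [Fintype β] (p : α → β → ℝ) : Prop :=
  (∀ x y, 0 ≤ p x y) ∧ ∀ x, ∑ y, p x y = 1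

/-- `p` is a probability distribution on the finite set `β`. -/
def IsProb {β : Type*} [Fintype β] (p : β → ℝ) : Prop :=
  (∀ y, 0 ≤ p y) ∧ ∑ y, p y = 1

/-- The marginal probability `π(s)` of signal `s` under prior `μ` and signaling scheme `π`. -/
def marg {Ω S : Type*} [Fintype Ω] (μ : Ω → ℝ) (π : Ω → S → ℝ) (s : S) : ℝ :=
  ∑ ω, μ ω * π ω s

/-- The posterior probability `π(ω|s)` of state `ω` given signal `s`. -/
def post {Ω S : Type*} [Fintype Ω] (μ : Ω → ℝ) (π : Ω → S → ℝ) (ω : Ω) (s : S) : ℝ :=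
  μ ω * π ω s / marg μ π s

/-- The receiver's expected utility `v(a, μ_s)` of action `a` under the posterior of signal `s`. -/
def vPost {Ω S A : Type*} [Fintype Ω] (μ : Ω → ℝ) (π : Ω → S → ℝ)
    (v : A → Ω → ℝ) (a : A) (s : S) : ℝ :=
  ∑ ω, post μ π ω s * v a ω

/-- Action `a` is `γ`-best-responding to signal `s`. -/
def IsBR {Ω S A : Type*} [Fintype Ω] [Fintype A] (μ : Ω → ℝ) (π : Ω → S → ℝ)
    (v : A → Ω → ℝ) (γ : ℝ) (a : A) (s : S) : Prop :=
  ∀ a' : A, vPost μ π v a' s - γ ≤ vPost μ π v a s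

/-- `ρ` is a `γ`-best-responding receiver strategy: on every signal that is sent with positive
probability, it puts probability `1` on `γ`-best-responding actions (equivalently, probability `0`
on every action that is not `γ`-best-responding). -/
def IsBRStrategy {Ω S A : Type*} [Fintype Ω] [Fintype A] (μ : Ω → ℝ) (π : Ω → S → ℝ)
    (v : A → Ω → ℝ) (γ : ℝ) (ρ : S → A → ℝ) : Prop :=
  ∀ s, 0 < marg μ π s → ∀ a, ¬ IsBR μ π v γ a s → ρ s a = 0

/-- `ρ` is a `(γ, δ)`-best-responding receiver strategy: on every signal that is sent with
positive probability, it puts probability at least `1 - δ` on `γ`-best-responding actions. -/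
def IsApproxBRStrategy {Ω S A : Type*} [Fintype Ω] [Fintype A] (μ : Ω → ℝ) (π : Ω → S → ℝ)
    (v : A → Ω → ℝ) (γ δ : ℝ) (ρ : S → A → ℝ) : Prop :=
  ∀ s, 0 < marg μ π s →
    1 - δ ≤ ∑ a ∈ Finset.univ.filter (fun a => IsBR μ π v γ a s), ρ s a

/-- The sender's expected utility `U_μ(π, ρ)`. -/
def senderU {Ω S A : Type*} [Fintype Ω] [Fintype S] [Fintype A] (μ : Ω → ℝ) (π : Ω → S → ℝ)
    (u : A → Ω → ℝ) (ρ : S → A → ℝ) : ℝ :=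
  ∑ ω, ∑ s, μ ω * π ω s * ∑ a, ρ s a * u a ω

/-- The obedient strategy for a direct-revelation scheme: take the recommended action. -/
def obedient {A : Type*} : A → A → ℝ := fun s a => if a = s then 1 else 0

/-- `OPT^BP(μ)`: the supremum of the sender's expected utility over direct-revelation schemes
(signal set `S = A`) and best-responding (`0`-best-responding) receiver strategies. -/
def OPTBP {Ω A : Type*} [Fintype Ω] [Fintype A] (μ : Ω → ℝ) (v u : A → Ω → ℝ) : ℝ :=
  sSup {x | ∃ (π : Ω → A → ℝ) (ρ : A → A → ℝ), IsDist π ∧ IsDist ρ ∧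
    IsBRStrategy μ π v 0 ρ ∧ x = senderU μ π u ρ}

/-- The `α`-robustification of a direct-revelation scheme `π`, where `aOf ω` is the receiver's
unique optimal action at state `ω`. -/
def robustify {Ω A : Type*} (π : Ω → A → ℝ) (aOf : Ω → A) (α : ℝ) : Ω → A → ℝ :=
  fun ω s => (1 - α) * π ω s + if s = aOf ω then α else 0

/-- `μ(Ω_a)`: the prior mass of the set of states whose unique optimal action is `a`. -/
def massOf {Ω A : Type*} [Fintype Ω] (μ : Ω → ℝ) (aOf : Ω → A) (a : A) : ℝ :=
  ∑ ω ∈ Finset.univ.filter (fun ω => aOf ω = a), μ ω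

/-- `μ_min = min_ω μ(ω)`. -/
def minPrior {Ω : Type*} [Fintype Ω] [Nonempty Ω] (μ : Ω → ℝ) : ℝ :=
  Finset.univ.inf' Finset.univ_nonempty μ

/-- The advantage term of recommendation `s` against deviation `a` in a direct-revelation
scheme `π`: the advantage `adv_π(s)` is the minimum of this quantity over `a ≠ s`. -/
def advTerm {Ω A : Type*} [Fintype Ω] (μ : Ω → ℝ) (π : Ω → A → ℝ) (v : A → Ω → ℝ)
    (s a : A) : ℝ :=
  ∑ ω, post μ π ω s * (v s ω - v a ω)


lemma prob_entry_le_one' {β : Type*} [Fintype β] {p : β → ℝ}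
    (h0 : ∀ y, 0 ≤ p y) (h1 : ∑ y, p y = 1) (y : β) : p y ≤ 1 := by
  calc p y ≤ ∑ z, p z := Finset.single_le_sum (fun z _ => h0 z) (Finset.mem_univ y)
    _ = 1 := h1

lemma senderU_le_one' {Ω S A : Type*} [Fintype Ω] [Fintype S] [Fintype A]
    (μ : Ω → ℝ) (hμ : IsProb μ) (π : Ω → S → ℝ) (hπ : IsDist π)
    (u : A → Ω → ℝ) (hu : ∀ a ω, 0 ≤ u a ω ∧ u a ω ≤ 1)
    (ρ : S → A → ℝ) (hρ : IsDist ρ) : senderU μ π u ρ ≤ 1 := by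
  unfold senderU
  have h1 : ∀ ω s, μ ω * π ω s * ∑ a, ρ s a * u a ω ≤ μ ω * π ω s := by
    intro ω s
    have hx : ∑ a, ρ s a * u a ω ≤ 1 := by
      calc ∑ a, ρ s a * u a ω ≤ ∑ a, ρ s a := Finset.sum_le_sum (fun a _ => by
            nlinarith [(hu a ω).1, (hu a ω).2, hρ.1 s a])
        _ = 1 := hρ.2 s
    nlinarith [mul_nonneg (hμ.1 ω) (hπ.1 ω s)]
  calc ∑ ω, ∑ s, μ ω * π ω s * ∑ a, ρ s a * u a ω
      ≤ ∑ ω, ∑ s, μ ω * π ω s :=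
        Finset.sum_le_sum (fun ω _ => Finset.sum_le_sum (fun s _ => h1 ω s))
    _ = ∑ ω, μ ω := by
        refine Finset.sum_congr rfl fun ω _ => ?_
        rw [← Finset.mul_sum, hπ.2 ω, mul_one]
    _ = 1 := hμ.2

/-- Lemma 2.4, lower bound: under Assumption A, with `μ_min > 0` and
`γ/(μ_min·Δ) < 1`, for every `ε > 0` there is a direct-revelation scheme guaranteeing the sender
at least `OPT^BP(μ) - γ/(μ_min·Δ) - ε` against every `γ`-best-responding strategy. -/
theorem bp_lower_bound
    {Ω A : Type*} [Fintype Ω] [Fintype A] [Nonempty Ω] [Nonempty A]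
    (μ : Ω → ℝ) (hμ : IsProb μ) (hμpos : ∀ ω, 0 < μ ω)
    (v : A → Ω → ℝ) (hv : ∀ a ω, 0 ≤ v a ω ∧ v a ω ≤ 1)
    (u : A → Ω → ℝ) (hu : ∀ a ω, 0 ≤ u a ω ∧ u a ω ≤ 1)
    -- Assumption A
    (aOf : Ω → A) (hBest : ∀ ω a, a ≠ aOf ω → v a ω < v (aOf ω) ω)
    (Δ : ℝ) (hΔpos : 0 < Δ) (hΔ : ∀ ω a, a ≠ aOf ω → Δ ≤ v (aOf ω) ω - v a ω)
    (hOnto : ∀ a, ∃ ω, aOf ω = a)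
    (γ : ℝ) (hγ : 0 ≤ γ) (hγ1 : γ / (minPrior μ * Δ) < 1) :
    ∀ ε > 0, ∃ π : Ω → A → ℝ, IsDist π ∧
      ∀ ρ : A → A → ℝ, IsDist ρ → IsBRStrategy μ π v γ ρ →
        OPTBP μ v u - γ / (minPrior μ * Δ) - ε ≤ senderU μ π u ρ := by
  intro ε hε
  have hm : 0 < minPrior μ := by
    unfold minPrior
    exact (Finset.lt_inf'_iff _).mpr (fun ω _ => hμpos ω)
  have hmΔ : 0 < minPrior μ * Δ := mul_pos hm hΔpos
  set c := γ / (minPrior μ * Δ) with hc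
  have hc0 : 0 ≤ c := div_nonneg hγ hmΔ.le
  -- Step 1: get a near-optimal (π₀, ρ₀)
  have hSne : {x | ∃ (π : Ω → A → ℝ) (ρ : A → A → ℝ), IsDist π ∧ IsDist ρ ∧
      IsBRStrategy μ π v 0 ρ ∧ x = senderU μ π u ρ}.Nonempty := by
    obtain ⟨a₀⟩ := (inferInstance : Nonempty A)
    set π0 : Ω → A → ℝ := fun _ s => if s = a₀ then 1 else 0 with hπ0def
    have hπ0d : IsDist π0 := by
      constructor
      · intro ω s; simp only [π0]; split <;> norm_num
      · intro ω; simp [π0]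
    have hex : ∀ s : A, ∃ a : A, ∀ a', vPost μ π0 v a' s ≤ vPost μ π0 v a s := by
      intro s
      obtain ⟨b, _, hb⟩ := Finset.exists_max_image Finset.univ
        (fun a => vPost μ π0 v a s) Finset.univ_nonempty
      exact ⟨b, fun a' => hb a' (Finset.mem_univ a')⟩
    choose f hf using hex
    refine ⟨senderU μ π0 u (fun s a => if a = f s then 1 else 0), π0,
      fun s a => if a = f s then 1 else 0, hπ0d, ?_, ?_, rfl⟩
    · constructor
      · intro s a; dsimp only; split <;> norm_num
      · intro s; simp
    · intro s _ a hna
      have haf : a ≠ f s := by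
        rintro rfl
        exact hna (fun a' => by simpa using hf s a')
      simp [haf]
  obtain ⟨x, hxmem, hx⟩ :
      ∃ x ∈ {x | ∃ (π : Ω → A → ℝ) (ρ : A → A → ℝ), IsDist π ∧ IsDist ρ ∧
        IsBRStrategy μ π v 0 ρ ∧ x = senderU μ π u ρ}, OPTBP μ v u - ε/2 < x := by
    refine exists_lt_of_lt_csSup hSne ?_
    have : OPTBP μ v u = sSup {x | ∃ (π : Ω → A → ℝ) (ρ : A → A → ℝ), IsDist π ∧ IsDist ρ ∧
        IsBRStrategy μ π v 0 ρ ∧ x = senderU μ π u ρ} := rfl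
    rw [← this]; linarith
  obtain ⟨π₀, ρ₀, hπ₀, hρ₀, hBR₀, hxeq⟩ := hxmem
  -- Step 2: compose into an obedient direct scheme π₁
  set π₁ : Ω → A → ℝ := fun ω a => ∑ s, π₀ ω s * ρ₀ s a with hπ₁def
  have hπ₁ : IsDist π₁ := by
    constructor
    · intro ω a
      exact Finset.sum_nonneg fun s _ => mul_nonneg (hπ₀.1 ω s) (hρ₀.1 s a)
    · intro ω
      calc ∑ a, π₁ ω a = ∑ a, ∑ s, π₀ ω s * ρ₀ s a := rfl
        _ = ∑ s, ∑ a, π₀ ω s * ρ₀ s a := Finset.sum_comm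
        _ = ∑ s, π₀ ω s := by
            refine Finset.sum_congr rfl fun s _ => ?_
            rw [← Finset.mul_sum, hρ₀.2 s, mul_one]
        _ = 1 := hπ₀.2 ω
  -- obedience of π₁
  have hObed : ∀ s a : A, 0 ≤ ∑ ω, μ ω * π₁ ω s * (v s ω - v a ω) := by
    intro s a
    have hexp : ∑ ω, μ ω * π₁ ω s * (v s ω - v a ω)
        = ∑ t, ρ₀ t s * ∑ ω, μ ω * π₀ ω t * (v s ω - v a ω) := by
      calc ∑ ω, μ ω * π₁ ω s * (v s ω - v a ω)
          = ∑ ω, ∑ t, ρ₀ t s * (μ ω * π₀ ω t * (v s ω - v a ω)) := by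
            refine Finset.sum_congr rfl fun ω _ => ?_
            show μ ω * (∑ t, π₀ ω t * ρ₀ t s) * (v s ω - v a ω) = _
            rw [Finset.mul_sum, Finset.sum_mul]
            exact Finset.sum_congr rfl fun t _ => by ring
        _ = ∑ t, ∑ ω, ρ₀ t s * (μ ω * π₀ ω t * (v s ω - v a ω)) := Finset.sum_comm
        _ = ∑ t, ρ₀ t s * ∑ ω, μ ω * π₀ ω t * (v s ω - v a ω) := by
            refine Finset.sum_congr rfl fun t _ => ?_
            rw [Finset.mul_sum]
    rw [hexp]
    refine Finset.sum_nonneg fun t _ => ?_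
    rcases eq_or_ne (ρ₀ t s) 0 with h0 | h0
    · rw [h0, zero_mul]
    rcases eq_or_lt_of_le (Finset.sum_nonneg (fun ω (_ : ω ∈ Finset.univ) =>
        mul_nonneg (hμ.1 ω) (hπ₀.1 ω t)) : (0:ℝ) ≤ marg μ π₀ t) with hz | hz
    · -- marginal is zero: every term is zero
      have hall : ∀ ω ∈ Finset.univ, μ ω * π₀ ω t = 0 := by
        intro ω hω
        have := (Finset.sum_eq_zero_iff_of_nonneg (fun ω _ =>
          mul_nonneg (hμ.1 ω) (hπ₀.1 ω t))).mp hz.symm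
        exact this ω hω
      have : ∑ ω, μ ω * π₀ ω t * (v s ω - v a ω) = 0 :=
        Finset.sum_eq_zero fun ω hω => by rw [hall ω hω, zero_mul]
      rw [this, mul_zero]
    · -- marginal positive: s is 0-best-responding at t
      have hbr : IsBR μ π₀ v 0 s t := by
        by_contra hnot
        exact h0 (hBR₀ t hz s hnot)
      have hge : vPost μ π₀ v a t ≤ vPost μ π₀ v s t := by
        have := hbr a; linarith
      have hne : marg μ π₀ t ≠ 0 := hz.ne'
      have key : ∑ ω, μ ω * π₀ ω t * (v s ω - v a ω)
          = marg μ π₀ t * (vPost μ π₀ v s t - vPost μ π₀ v a t) := by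
        unfold vPost post
        rw [← Finset.sum_sub_distrib, Finset.mul_sum]
        refine Finset.sum_congr rfl fun ω _ => ?_
        field_simp
      have : 0 ≤ ∑ ω, μ ω * π₀ ω t * (v s ω - v a ω) := by
        rw [key]
        exact mul_nonneg hz.le (by linarith)
      exact mul_nonneg (hρ₀.1 t s) this
  -- Step 3: senderU of π₁ with obedient strategy
  set T : ℝ := ∑ ω, ∑ s, μ ω * π₁ ω s * u s ω with hTdef
  have hobd : IsDist (obedient (A := A)) := by
    constructor
    · intro s a; unfold obedient; split <;> norm_num
    · intro s; simp [obedient]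
  have hT : senderU μ π₁ u obedient = T := by
    unfold senderU
    refine Finset.sum_congr rfl fun ω _ => Finset.sum_congr rfl fun s _ => ?_
    congr 1
    simp [obedient]
  have hTx : T = senderU μ π₀ u ρ₀ := by
    rw [hTdef]
    unfold senderU
    refine Finset.sum_congr rfl fun ω _ => ?_
    calc ∑ s, μ ω * π₁ ω s * u s ω
        = ∑ s, ∑ t, μ ω * π₀ ω t * (ρ₀ t s * u s ω) := by
          refine Finset.sum_congr rfl fun s _ => ?_
          show μ ω * (∑ t, π₀ ω t * ρ₀ t s) * u s ω = _
          rw [Finset.mul_sum, Finset.sum_mul]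
          exact Finset.sum_congr rfl fun t _ => by ring
      _ = ∑ t, ∑ s, μ ω * π₀ ω t * (ρ₀ t s * u s ω) := Finset.sum_comm
      _ = ∑ t, μ ω * π₀ ω t * ∑ s, ρ₀ t s * u s ω := by
          refine Finset.sum_congr rfl fun t _ => ?_
          rw [Finset.mul_sum]
  have hT1 : T ≤ 1 := by
    rw [← hT]
    exact senderU_le_one' μ hμ π₁ hπ₁ u hu obedient hobd
  -- Step 4: robustification
  set α : ℝ := min 1 (c + ε/2) with hαdef
  have hα0 : 0 < α := lt_min one_pos (by linarith)
  have hα1 : α ≤ 1 := min_le_left _ _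
  have hαle : α ≤ c + ε/2 := min_le_right _ _
  have hαc : c < α := lt_min hγ1 (by linarith)
  have hαγ : γ < α * (minPrior μ * Δ) := by
    rw [hc] at hαc
    exact (div_lt_iff₀ hmΔ).mp hαc
  refine ⟨robustify π₁ aOf α, ?_, ?_⟩
  case _ =>
    constructor
    · intro ω s
      show 0 ≤ (1 - α) * π₁ ω s + if s = aOf ω then α else 0
      have h1 : 0 ≤ (1 - α) * π₁ ω s := mul_nonneg (by linarith) (hπ₁.1 ω s)
      split <;> linarith
    · intro ω
      show ∑ s, ((1 - α) * π₁ ω s + if s = aOf ω then α else 0) = 1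
      rw [Finset.sum_add_distrib, ← Finset.mul_sum, hπ₁.2 ω,
        Finset.sum_ite_eq' Finset.univ (aOf ω) (fun _ => α)]
      simp
  case _ =>
    intro ρ hρ hρBR
    have hπd : IsDist (robustify π₁ aOf α) := by
      constructor
      · intro ω s
        show 0 ≤ (1 - α) * π₁ ω s + if s = aOf ω then α else 0
        have h1 : 0 ≤ (1 - α) * π₁ ω s := mul_nonneg (by linarith) (hπ₁.1 ω s)
        split <;> linarith
      · intro ω
        show ∑ s, ((1 - α) * π₁ ω s + if s = aOf ω then α else 0) = 1
        rw [Finset.sum_add_distrib, ← Finset.mul_sum, hπ₁.2 ω,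
          Finset.sum_ite_eq' Finset.univ (aOf ω) (fun _ => α)]
        simp
    set π : Ω → A → ℝ := robustify π₁ aOf α with hπdef
    have hmargpos : ∀ s, 0 < marg μ π s := by
      intro s
      obtain ⟨ω₀, hω₀⟩ := hOnto s
      have hval : π ω₀ s = (1 - α) * π₁ ω₀ s + α := by
        show ((1 - α) * π₁ ω₀ s + if s = aOf ω₀ then α else 0) = _
        rw [if_pos hω₀.symm]
      have hterm : α * μ ω₀ ≤ μ ω₀ * π ω₀ s := by
        rw [hval]
        nlinarith [mul_nonneg (hμpos ω₀).le
          (mul_nonneg (by linarith : (0:ℝ) ≤ 1 - α) (hπ₁.1 ω₀ s))]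
      have hsum := Finset.single_le_sum (f := fun ω => μ ω * π ω s)
        (fun ω _ => mul_nonneg (hμ.1 ω) (hπd.1 ω s)) (Finset.mem_univ ω₀)
      have hαμ : 0 < α * μ ω₀ := mul_pos hα0 (hμpos ω₀)
      unfold marg
      linarith
    have hmargle : ∀ s, marg μ π s ≤ 1 := by
      intro s
      unfold marg
      calc ∑ ω, μ ω * π ω s ≤ ∑ ω, μ ω := Finset.sum_le_sum fun ω _ => by
            nlinarith [hμ.1 ω, hπd.1 ω s, prob_entry_le_one' (hπd.1 ω) (hπd.2 ω) s]
        _ = 1 := hμ.2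
    -- key advantage bound
    have hAdv : ∀ s a : A, a ≠ s →
        α * (minPrior μ * Δ) ≤ ∑ ω, μ ω * π ω s * (v s ω - v a ω) := by
      intro s a has
      have hsplit : ∑ ω, μ ω * π ω s * (v s ω - v a ω)
          = (1 - α) * (∑ ω, μ ω * π₁ ω s * (v s ω - v a ω))
            + α * ∑ ω ∈ Finset.univ.filter (fun ω => aOf ω = s), μ ω * (v s ω - v a ω) := by
        calc ∑ ω, μ ω * π ω s * (v s ω - v a ω)
            = ∑ ω, ((1 - α) * (μ ω * π₁ ω s * (v s ω - v a ω))
              + if aOf ω = s then α * (μ ω * (v s ω - v a ω)) else 0) := by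
              refine Finset.sum_congr rfl fun ω _ => ?_
              show μ ω * ((1 - α) * π₁ ω s + if s = aOf ω then α else 0) * (v s ω - v a ω) = _
              rcases eq_or_ne (aOf ω) s with h | h
              · rw [if_pos h.symm, if_pos h]; ring
              · rw [if_neg (Ne.symm h), if_neg h]; ring
          _ = _ := by
              rw [Finset.sum_add_distrib, ← Finset.mul_sum, ← Finset.sum_filter,
                ← Finset.mul_sum]
      obtain ⟨ω₀, hω₀⟩ := hOnto s
      have h2 : minPrior μ * Δ ≤
          ∑ ω ∈ Finset.univ.filter (fun ω => aOf ω = s), μ ω * (v s ω - v a ω) := by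
        have hterm : ∀ ω ∈ Finset.univ.filter (fun ω => aOf ω = s),
            μ ω * Δ ≤ μ ω * (v s ω - v a ω) := by
          intro ω hω
          have haω : aOf ω = s := (Finset.mem_filter.mp hω).2
          have hΔω := hΔ ω a (by rw [haω]; exact has)
          rw [haω] at hΔω
          nlinarith [(hμpos ω).le]
        have hmin : minPrior μ ≤ μ ω₀ := Finset.inf'_le μ (Finset.mem_univ ω₀)
        calc minPrior μ * Δ ≤ μ ω₀ * Δ := by nlinarith
          _ ≤ ∑ ω ∈ Finset.univ.filter (fun ω => aOf ω = s), μ ω * Δ :=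
              Finset.single_le_sum (fun ω _ => mul_nonneg (hμ.1 ω) hΔpos.le)
                (Finset.mem_filter.mpr ⟨Finset.mem_univ ω₀, hω₀⟩)
          _ ≤ _ := Finset.sum_le_sum hterm
      have h1 : 0 ≤ (1 - α) * (∑ ω, μ ω * π₁ ω s * (v s ω - v a ω)) :=
        mul_nonneg (by linarith) (hObed s a)
      have h3 : α * (minPrior μ * Δ) ≤
          α * ∑ ω ∈ Finset.univ.filter (fun ω => aOf ω = s), μ ω * (v s ω - v a ω) :=
        mul_le_mul_of_nonneg_left h2 hα0.le
      linarith [hsplit ▸ (by linarith : α * (minPrior μ * Δ) ≤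
        (1 - α) * (∑ ω, μ ω * π₁ ω s * (v s ω - v a ω))
          + α * ∑ ω ∈ Finset.univ.filter (fun ω => aOf ω = s), μ ω * (v s ω - v a ω))]
    -- any γ-BR strategy is obedient
    have hρ0 : ∀ s a : A, a ≠ s → ρ s a = 0 := by
      intro s a has
      refine hρBR s (hmargpos s) a ?_
      intro hIsBR
      have hne : marg μ π s ≠ 0 := (hmargpos s).ne'
      have hkey : vPost μ π v s s - vPost μ π v a s
          = (∑ ω, μ ω * π ω s * (v s ω - v a ω)) / marg μ π s := by
        unfold vPost post
        rw [← Finset.sum_sub_distrib, Finset.sum_div]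
        refine Finset.sum_congr rfl fun ω _ => ?_
        field_simp
      have hA := hAdv s a has
      have hdiv : α * (minPrior μ * Δ) ≤
          (∑ ω, μ ω * π ω s * (v s ω - v a ω)) / marg μ π s := by
        rw [le_div_iff₀ (hmargpos s)]
        nlinarith [hmargle s, hmargpos s, mul_pos hα0 hmΔ]
      have hcontr := hIsBR s
      have hfin2 : γ < vPost μ π v s s - vPost μ π v a s := by
        rw [hkey]
        linarith
      linarith
    have hρ1 : ∀ s : A, ρ s s = 1 := by
      intro s
      have hsum : ∑ a, ρ s a = ρ s s :=
        Finset.sum_eq_single s (fun b _ hb => hρ0 s b hb)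
          (fun h => absurd (Finset.mem_univ s) h)
      rw [← hsum, hρ.2 s]
    -- final computation
    have hfinal : senderU μ π u ρ = ∑ ω, ∑ s, μ ω * π ω s * u s ω := by
      unfold senderU
      refine Finset.sum_congr rfl fun ω _ => Finset.sum_congr rfl fun s _ => ?_
      congr 1
      rw [Finset.sum_eq_single s (fun b _ hb => by rw [hρ0 s b hb, zero_mul])
        (fun h => absurd (Finset.mem_univ s) h), hρ1 s, one_mul]
    have hsplit2 : ∑ ω, ∑ s, μ ω * π ω s * u s ω
        = (1 - α) * T + α * ∑ ω, μ ω * u (aOf ω) ω := by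
      rw [hTdef, Finset.mul_sum, Finset.mul_sum, ← Finset.sum_add_distrib]
      refine Finset.sum_congr rfl fun ω _ => ?_
      calc ∑ s, μ ω * π ω s * u s ω
          = ∑ s, ((1 - α) * (μ ω * π₁ ω s * u s ω)
            + if s = aOf ω then α * (μ ω * u s ω) else 0) := by
            refine Finset.sum_congr rfl fun s _ => ?_
            show μ ω * ((1 - α) * π₁ ω s + if s = aOf ω then α else 0) * u s ω = _
            rcases eq_or_ne s (aOf ω) with h | h
            · rw [if_pos h, if_pos h]; ring
            · rw [if_neg h, if_neg h]; ring
        _ = (1 - α) * (∑ s, μ ω * π₁ ω s * u s ω) + α * (μ ω * u (aOf ω) ω) := by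
            rw [Finset.sum_add_distrib, ← Finset.mul_sum,
              Finset.sum_ite_eq' Finset.univ (aOf ω) (fun s => α * (μ ω * u s ω))]
            simp
    have hnn : 0 ≤ ∑ ω, μ ω * u (aOf ω) ω :=
      Finset.sum_nonneg fun ω _ => mul_nonneg (hμ.1 ω) (hu (aOf ω) ω).1
    have hprod : (1 - α) * T = T - α * T := by ring
    have hαT : α * T ≤ α := by nlinarith
    have hterm2 : 0 ≤ α * ∑ ω, μ ω * u (aOf ω) ω := mul_nonneg hα0.le hnn
    -- combine everything
    have hTbig : OPTBP μ v u - ε/2 < T := by rw [hTx]; rw [hxeq] at hx; exact hx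
    rw [hfinal, hsplit2]
    linarith
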